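/- The minimum of #S_x over x ∈ {1, 2, …, A₁} equals min{#S_1, #S_{A_n}, #S_{A_{n−1}}, …, #S_{A_2}, #S_{A_1}}. (Since A₁ is the multiplicity of Γₙ, this minimum is the second Feng–Rao number E(Γₙ, 2).) -/

import Mathlib

/-- A numerical semigroup: an additive submonoid of ℕ with finite complement. -/
def IsNumericalSemigroup (Γ : Set ℕ) : Prop :=
  0 ∈ Γ ∧ (∀ x ∈ Γ, ∀ y ∈ Γ, x + y ∈ Γ) ∧ Γᶜ.Finite

/-- The Apéry set Ap(Γ,x) = {s ∈ Γ : s - x ∉ Γ}. -/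
def Ap (Γ : Set ℕ) (x : ℕ) : Set ℕ := {s ∈ Γ | ∀ t ∈ Γ, s ≠ t + x}

/-- The inductive numerical semigroups Γ₀ = ℕ, Γᵢ = aᵢ·Γ_{i-1} ∪ (aᵢbᵢ + ℕ). -/
def IndSG (a b : ℕ → ℕ) : ℕ → Set ℕ
  | 0 => Set.univ
  | i + 1 => (fun x => a (i + 1) * x) '' IndSG a b i ∪ {x | a (i + 1) * b (i + 1) ≤ x}

lemma ncard_Ico (u v : ℕ) : (Set.Ico u v).ncard = v - u := by
  rw [← Finset.coe_Ico, Set.ncard_coe_finset, Nat.card_Ico]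

lemma ap_subset (T : Set ℕ) (C x : ℕ) (hC : ∀ s, C ≤ s → s ∈ T) :
    Ap T x ⊆ Set.Iio (C + x) := by
  intro s hs
  simp only [Set.mem_Iio]
  by_contra h
  push_neg at h
  exact hs.2 (s - x) (hC _ (by omega)) (by omega)

lemma mid_count (T : Set ℕ) (C x : ℕ) (hx : x ≤ C) :
    {s : ℕ | C ≤ s ∧ s < C + x ∧ ¬ ∃ t ∈ T, s = t + x}.ncard
      + (T ∩ Set.Ico (C - x) C).ncard = x := by
  have hset : {s : ℕ | C ≤ s ∧ s < C + x ∧ ¬ ∃ t ∈ T, s = t + x}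
      = (fun u => u + x) '' (Set.Ico (C - x) C \ T) := by
    ext s
    simp only [Set.mem_setOf_eq, Set.mem_image, Set.mem_diff, Set.mem_Ico]
    constructor
    · rintro ⟨h1, h2, h3⟩
      exact ⟨s - x, ⟨⟨by omega, by omega⟩, fun hT => h3 ⟨s - x, hT, by omega⟩⟩, by omega⟩
    · rintro ⟨u, ⟨⟨hu1, hu2⟩, hu3⟩, rfl⟩
      refine ⟨by omega, by omega, ?_⟩
      rintro ⟨t, ht, he⟩
      have : t = u := by omega
      exact hu3 (this ▸ ht)
  have hIco : Set.Ico (C - x) C \ T = Set.Ico (C - x) C \ (T ∩ Set.Ico (C - x) C) := by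
    ext u
    simp only [Set.mem_diff, Set.mem_inter_iff, Set.mem_Ico]
    tauto
  have hfin : (Set.Ico (C - x) C).Finite := Set.finite_Ico _ _
  have hsub : T ∩ Set.Ico (C - x) C ⊆ Set.Ico (C - x) C := Set.inter_subset_right
  have hle : (T ∩ Set.Ico (C - x) C).ncard ≤ (Set.Ico (C - x) C).ncard :=
    Set.ncard_le_ncard hsub hfin
  rw [hset, Set.ncard_image_of_injective _ (add_left_injective x), hIco,
    Set.ncard_diff hsub (hfin.subset hsub)]
  rw [ncard_Ico] at hle ⊢
  omega

lemma ap_split (T : Set ℕ) (C x : ℕ) (hC : ∀ s, C ≤ s → s ∈ T) (hx : x ≤ C) :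
    (Ap T x).ncard = (Ap T x ∩ Set.Iio C).ncard
      + {s : ℕ | C ≤ s ∧ s < C + x ∧ ¬ ∃ t ∈ T, s = t + x}.ncard := by
  have hfin : (Ap T x).Finite := (Set.finite_Iio _).subset (ap_subset T C x hC)
  have hsplit : Ap T x = (Ap T x ∩ Set.Iio C)
      ∪ {s : ℕ | C ≤ s ∧ s < C + x ∧ ¬ ∃ t ∈ T, s = t + x} := by
    ext s
    simp only [Set.mem_union, Set.mem_inter_iff, Set.mem_Iio, Set.mem_setOf_eq]
    constructor
    · intro hs
      rcases lt_or_ge s C with h | h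
      · exact Or.inl ⟨hs, h⟩
      · refine Or.inr ⟨h, ?_, ?_⟩
        · by_contra hge
          push_neg at hge
          exact hs.2 (s - x) (hC _ (by omega)) (by omega)
        · rintro ⟨t, ht, he⟩
          exact hs.2 t ht he
    · rintro (⟨hs, _⟩ | ⟨h1, h2, h3⟩)
      · exact hs
      · exact ⟨hC s h1, fun t ht he => h3 ⟨t, ht, he⟩⟩
  have hdisj : Disjoint (Ap T x ∩ Set.Iio C)
      {s : ℕ | C ≤ s ∧ s < C + x ∧ ¬ ∃ t ∈ T, s = t + x} := by
    rw [Set.disjoint_left]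
    rintro s ⟨_, hs⟩ ⟨h1, _, _⟩
    exact absurd h1 (by simpa using hs)
  conv_lhs => rw [hsplit]
  exact Set.ncard_union_eq hdisj (hfin.subset Set.inter_subset_left)
    ((Set.finite_Ico C (C + x)).subset (by rintro s ⟨h1, h2, _⟩; exact ⟨h1, h2⟩))
section Abstract

variable {S Γ : Set ℕ} {A B : ℕ}

lemma low_mem (hΓ : Γ = (fun t => A * t) '' S ∪ {z | A * B ≤ z})
    {s : ℕ} (hs : s ∈ Γ) (hlt : s < A * B) : ∃ t ∈ S, t < B ∧ s = A * t := by
  rw [hΓ] at hs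
  rcases hs with ⟨t, ht, rfl⟩ | h
  · have hst : A * t < A * B := hlt
    exact ⟨t, ht, Nat.lt_of_mul_lt_mul_left hst, rfl⟩
  · exact absurd h (by simpa using hlt)

lemma ray_mem (hΓ : Γ = (fun t => A * t) '' S ∪ {z | A * B ≤ z}) :
    ∀ s, A * B ≤ s → s ∈ Γ := fun s hs => hΓ ▸ Or.inr hs

/-- Count of Γ in the window [A*B - x, A*B) is at most x / A. -/
lemma cnt_le (hΓ : Γ = (fun t => A * t) '' S ∪ {z | A * B ≤ z}) (hA : 1 ≤ A) (x : ℕ) :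
    (Γ ∩ Set.Ico (A * B - x) (A * B)).ncard ≤ x / A := by
  obtain ⟨d, hd⟩ : ∃ d, d = x / A := ⟨_, rfl⟩
  rw [← hd]
  have hsub : Γ ∩ Set.Ico (A * B - x) (A * B) ⊆ (fun t => A * t) '' Set.Ico (B - d) B := by
    rintro s ⟨hs, h1, h2⟩
    obtain ⟨t, htS, htB, rfl⟩ := low_mem hΓ hs h2
    have h1' : A * B - x ≤ A * t := h1
    have h2' : A * t < A * B := h2
    have hmul : (B - t) * A ≤ x := by rw [Nat.mul_comm, Nat.mul_sub]; omega
    have hdt : B - t ≤ d := hd ▸ (Nat.le_div_iff_mul_le hA).mpr hmul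
    exact ⟨t, ⟨by omega, htB⟩, rfl⟩
  calc (Γ ∩ Set.Ico (A * B - x) (A * B)).ncard
      ≤ ((fun t => A * t) '' Set.Ico (B - d) B).ncard :=
        Set.ncard_le_ncard hsub ((Set.finite_Ico _ _).image _)
    _ = (Set.Ico (B - d) B).ncard :=
        Set.ncard_image_of_injective _ (fun u v h => by simpa using mul_left_cancel₀ (by omega : A ≠ 0) h)
    _ ≤ d := by rw [ncard_Ico]; omega

/-- The key cardinality formula for `Ap Γ x` when `A ∤ x`. -/
lemma count_nd (hΓ : Γ = (fun t => A * t) '' S ∪ {z | A * B ≤ z}) (hA : 2 ≤ A)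
    {x : ℕ} (hx2 : x ≤ A * B) (hnd : ¬ A ∣ x) :
    (Ap Γ x).ncard + (Γ ∩ Set.Ico (A * B - x) (A * B)).ncard
      = (Γ ∩ Set.Iio (A * B)).ncard + x := by
  have hC := ray_mem hΓ
  have hsplit := ap_split Γ (A * B) x hC hx2
  have hlow : Ap Γ x ∩ Set.Iio (A * B) = Γ ∩ Set.Iio (A * B) := by
    ext s
    simp only [Set.mem_inter_iff, Set.mem_Iio]
    constructor
    · rintro ⟨hs, h⟩; exact ⟨hs.1, h⟩
    · rintro ⟨hs, h⟩
      refine ⟨⟨hs, ?_⟩, h⟩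
      rintro u hu rfl
      obtain ⟨t, htS, htB, het⟩ := low_mem hΓ hs h
      obtain ⟨v, hvS, hvB, hev⟩ := low_mem hΓ hu (by omega)
      refine hnd ⟨t - v, ?_⟩
      rw [Nat.mul_sub]
      omega
  have hmid := mid_count Γ (A * B) x hx2
  rw [hlow] at hsplit
  omega

/-- The window of Γ for a multiple `A*y` is the image of the window of S for `y`. -/
lemma window_eq (hΓ : Γ = (fun t => A * t) '' S ∪ {z | A * B ≤ z}) (hA0 : 0 < A)
    {y : ℕ} (hy : y ≤ B) :
    Γ ∩ Set.Ico (A * B - A * y) (A * B) = (fun t => A * t) '' (S ∩ Set.Ico (B - y) B) := by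
  have hABy : A * (B - y) = A * B - A * y := Nat.mul_sub A B y
  ext s
  constructor
  · rintro ⟨hs, h1, h2⟩
    obtain ⟨t, htS, htB, rfl⟩ := low_mem hΓ hs h2
    have h1' : A * B - A * y ≤ A * t := h1
    have h3 : A * (B - y) ≤ A * t := by rw [hABy]; omega
    exact ⟨t, ⟨htS, Nat.le_of_mul_le_mul_left h3 (by omega), htB⟩, rfl⟩
  · rintro ⟨t, ⟨htS, ht1, ht2⟩, rfl⟩
    have h3 : A * B - A * y ≤ A * t := by
      rw [← hABy]; exact Nat.mul_le_mul_left A ht1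
    have h4 : A * t < A * B := by
      have : 0 < A := hA0
      exact (Nat.mul_lt_mul_left this).mpr ht2
    exact ⟨hΓ ▸ Or.inl ⟨t, htS, rfl⟩, h3, h4⟩

/-- `#Ap(Γ, A*y) + y = #Ap(S, y) + A*y` for `y ≤ B`. -/
lemma count_mul (hΓ : Γ = (fun t => A * t) '' S ∪ {z | A * B ≤ z}) (hA : 2 ≤ A)
    (hSB : ∀ t, B ≤ t → t ∈ S) {y : ℕ} (hy2 : y ≤ B) :
    (Ap Γ (A * y)).ncard + y = (Ap S y).ncard + A * y := by
  have hAy : A * y ≤ A * B := Nat.mul_le_mul_left A hy2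
  have hsplitΓ := ap_split Γ (A * B) (A * y) (ray_mem hΓ) hAy
  have hsplitS := ap_split S B y hSB hy2
  have hmidΓ := mid_count Γ (A * B) (A * y) hAy
  have hmidS := mid_count S B y hy2
  have hwin := window_eq hΓ (by omega) hy2
  have hinj : Function.Injective (fun t : ℕ => A * t) :=
    fun u v h => by simpa using mul_left_cancel₀ (by omega : A ≠ 0) h
  have hcnt : (Γ ∩ Set.Ico (A * B - A * y) (A * B)).ncard
      = (S ∩ Set.Ico (B - y) B).ncard := by rw [hwin, Set.ncard_image_of_injective _ hinj]
  have hcle : (S ∩ Set.Ico (B - y) B).ncard ≤ y := by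
    calc (S ∩ Set.Ico (B - y) B).ncard ≤ (Set.Ico (B - y) B).ncard :=
          Set.ncard_le_ncard Set.inter_subset_right (Set.finite_Ico _ _)
      _ ≤ y := by rw [ncard_Ico]; omega
  -- low parts agree
  have hlow : Ap Γ (A * y) ∩ Set.Iio (A * B) = (fun t => A * t) '' (Ap S y ∩ Set.Iio B) := by
    ext s
    constructor
    · rintro ⟨⟨hs, hap⟩, hlt⟩
      simp only [Set.mem_Iio] at hlt
      obtain ⟨t, htS, htB, rfl⟩ := low_mem hΓ hs hlt
      refine ⟨t, ⟨⟨htS, ?_⟩, htB⟩, rfl⟩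
      rintro u huS rfl
      exact hap (A * u) (hΓ ▸ Or.inl ⟨u, huS, rfl⟩) (by ring)
    · rintro ⟨t, ⟨⟨htS, hap⟩, htB⟩, rfl⟩
      simp only [Set.mem_Iio] at htB
      have h4 : A * t < A * B := (Nat.mul_lt_mul_left (by omega : 0 < A)).mpr htB
      refine ⟨⟨hΓ ▸ Or.inl ⟨t, htS, rfl⟩, ?_⟩, h4⟩
      rintro u hu he
      have hult : u < A * B := by
        have he' : A * t = u + A * y := he
        omega
      obtain ⟨v, hvS, hvB, rfl⟩ := low_mem hΓ hu hult
      have he' : A * t = A * v + A * y := he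
      have : t = v + y := hinj (show A * t = A * (v + y) by rw [he']; ring)
      exact hap v hvS this
  have hlowc : (Ap Γ (A * y) ∩ Set.Iio (A * B)).ncard = (Ap S y ∩ Set.Iio B).ncard := by
    rw [hlow, Set.ncard_image_of_injective _ hinj]
  omega

end Abstract
lemma prodle (n : ℕ) (a b : ℕ → ℕ)
    (hb1 : 1 ≤ b 1) (hb : ∀ i, 1 ≤ i → i ≤ n → a i * b i ≤ b (i + 1)) :
    ∏ j ∈ Finset.Icc 1 n, a j ≤ b (n + 1) := by
  induction n with
  | zero => simpa using hb1
  | succ m ih =>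
    have h1 : ∏ j ∈ Finset.Icc 1 (m + 1), a j
        = (∏ j ∈ Finset.Icc 1 m, a j) * a (m + 1) :=
      Finset.prod_Icc_succ_top (by omega) a
    have h2 := ih (fun i h1i h2i => hb i h1i (by omega))
    calc ∏ j ∈ Finset.Icc 1 (m + 1), a j
        = (∏ j ∈ Finset.Icc 1 m, a j) * a (m + 1) := h1
      _ ≤ b (m + 1) * a (m + 1) := Nat.mul_le_mul_right _ h2
      _ = a (m + 1) * b (m + 1) := Nat.mul_comm _ _
      _ ≤ b (m + 2) := hb (m + 1) (by omega) (by omega)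

lemma prod_tail_le (n : ℕ) (a : ℕ → ℕ) (ha : ∀ i, 1 ≤ i → i ≤ n → 2 ≤ a i)
    (i : ℕ) (hi : 1 ≤ i) :
    ∏ j ∈ Finset.Icc i n, a j ≤ ∏ j ∈ Finset.Icc 1 n, a j :=
  Finset.prod_le_prod_of_subset_of_one_le'
    (Finset.Icc_subset_Icc_left hi)
    (fun j hj _ => by
      have := Finset.mem_Icc.mp hj
      exact le_trans one_le_two (ha j this.1 this.2))

lemma prod_pos (n i : ℕ) (a : ℕ → ℕ) (ha : ∀ i, 1 ≤ i → i ≤ n → 2 ≤ a i)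
    (hi : 1 ≤ i) :
    1 ≤ ∏ j ∈ Finset.Icc i n, a j :=
  Finset.one_le_prod' (fun j hj => by
    have := Finset.mem_Icc.mp hj
    exact le_trans one_le_two (ha j (by omega) this.2))

/-- Main induction: every `x ∈ [1, A₁]` is dominated (w.r.t. `N(·) + lam·(·)`)
by `1` or one of the `Aᵢ`. -/
lemma key : ∀ (n : ℕ) (a b : ℕ → ℕ),
    (∀ i, 1 ≤ i → i ≤ n → 2 ≤ a i) → 1 ≤ b 1 →
    (∀ i, 1 ≤ i → i + 1 ≤ n → a i * b i ≤ b (i + 1)) →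
    ∀ lam x, 1 ≤ x → x ≤ ∏ j ∈ Finset.Icc 1 n, a j →
    ∃ x', (x' = 1 ∨ ∃ i, 1 ≤ i ∧ i ≤ n ∧ x' = ∏ j ∈ Finset.Icc i n, a j) ∧
      (Ap (IndSG a b n) x').ncard + lam * x'
        ≤ (Ap (IndSG a b n) x).ncard + lam * x := by
  intro n
  induction n with
  | zero =>
    intro a b ha hb1 hb lam x hx1 hx2
    have h0 : ∏ j ∈ Finset.Icc 1 0, a j = 1 := by simp
    have hx : x = 1 := by omega
    exact ⟨x, Or.inl hx, le_rfl⟩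
  | succ n ih =>
    intro a b ha hb1 hb lam x hx1 hx2
    have hΓ : IndSG a b (n + 1) = (fun t => a (n + 1) * t) '' IndSG a b n
        ∪ {z | a (n + 1) * b (n + 1) ≤ z} := rfl
    have hA2 : 2 ≤ a (n + 1) := ha (n + 1) (by omega) le_rfl
    have hPB : ∏ j ∈ Finset.Icc 1 n, a j ≤ b (n + 1) :=
      prodle n a b hb1 (fun i h1i h2i => hb i h1i (by omega))
    have hP1 : 1 ≤ ∏ j ∈ Finset.Icc 1 n, a j :=
      prod_pos n 1 a (fun i h1i h2i => ha i h1i (by omega)) le_rfl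
    have hB1 : 1 ≤ b (n + 1) := le_trans hP1 hPB
    have hSB : ∀ t, b (n + 1) ≤ t → t ∈ IndSG a b n := by
      intro t ht
      rcases Nat.eq_zero_or_pos n with hn0 | hn1
      · subst hn0; trivial
      · have hab : a n * b n ≤ b (n + 1) := hb n hn1 le_rfl
        rcases n with _ | m
        · omega
        · exact Or.inr (by simp only [Set.mem_setOf_eq]; omega)
    have hProd : ∏ j ∈ Finset.Icc 1 (n + 1), a j
        = (∏ j ∈ Finset.Icc 1 n, a j) * a (n + 1) := Finset.prod_Icc_succ_top (by omega) a
    have hxAB : x ≤ a (n + 1) * b (n + 1) := by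
      rw [hProd] at hx2
      calc x ≤ (∏ j ∈ Finset.Icc 1 n, a j) * a (n + 1) := hx2
        _ ≤ b (n + 1) * a (n + 1) := Nat.mul_le_mul_right _ hPB
        _ = a (n + 1) * b (n + 1) := Nat.mul_comm _ _
    by_cases hdvd : a (n + 1) ∣ x
    · -- x = a(n+1) * y : use the induction hypothesis with modified lam
      obtain ⟨y, rfl⟩ := hdvd
      have hy1 : 1 ≤ y := by
        rcases y with _ | y
        · simp at hx1
        · omega
      have hyP : y ≤ ∏ j ∈ Finset.Icc 1 n, a j := by
        rw [hProd] at hx2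
        have hx2' : y * a (n + 1) ≤ (∏ j ∈ Finset.Icc 1 n, a j) * a (n + 1) := by
          rw [Nat.mul_comm y]; exact hx2
        exact Nat.le_of_mul_le_mul_right hx2' (show 0 < a (n + 1) by omega)
      have htrans : ∀ z, z ≤ b (n + 1) →
          (Ap (IndSG a b (n + 1)) (a (n + 1) * z)).ncard + lam * (a (n + 1) * z)
            = (Ap (IndSG a b n) z).ncard + (a (n + 1) * (1 + lam) - 1) * z := by
        intro z hzB
        have hcm := count_mul hΓ hA2 hSB hzB
        have e4 : (1 + lam) * (a (n + 1) * z) = a (n + 1) * z + lam * (a (n + 1) * z) := by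
          ring
        have e5 : (a (n + 1) * (1 + lam) - 1 + 1) * z
            = (a (n + 1) * (1 + lam) - 1) * z + z := by ring
        have e6 : (a (n + 1) * (1 + lam) - 1 + 1) * z = (1 + lam) * (a (n + 1) * z) := by
          have h7 : a (n + 1) * (1 + lam) - 1 + 1 = a (n + 1) * (1 + lam) := by
            have : 1 ≤ a (n + 1) * (1 + lam) :=
              le_trans (by omega) (Nat.le_mul_of_pos_right _ (by omega))
            omega
          rw [h7]; ring
        omega
      obtain ⟨y', hspec, hle⟩ := ih a b (fun i h1 h2 => ha i h1 (by omega)) hb1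
        (fun i h1 h2 => hb i h1 (by omega)) (a (n + 1) * (1 + lam) - 1) y hy1 hyP
      have hy'P : y' ≤ ∏ j ∈ Finset.Icc 1 n, a j := by
        rcases hspec with rfl | ⟨i, hi1, hi2, rfl⟩
        · exact hP1
        · exact prod_tail_le n a (fun i h1 h2 => ha i h1 (by omega)) i hi1
      refine ⟨a (n + 1) * y', ?_, ?_⟩
      · refine Or.inr ?_
        rcases hspec with rfl | ⟨i, hi1, hi2, rfl⟩
        · refine ⟨n + 1, by omega, le_rfl, ?_⟩
          rw [Finset.Icc_self, Finset.prod_singleton, mul_one]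
        · refine ⟨i, hi1, by omega, ?_⟩
          rw [Finset.prod_Icc_succ_top (by omega) a]
          ring
      · rw [htrans y' (le_trans hy'P hPB), htrans y (le_trans hyP hPB)]
        exact hle
    · -- a(n+1) ∤ x : x' = 1 works
      refine ⟨1, Or.inl rfl, ?_⟩
      have h1AB : 1 ≤ a (n + 1) * b (n + 1) :=
        le_trans (show (1:ℕ) ≤ a (n + 1) by omega) (Nat.le_mul_of_pos_right _ (by omega))
      have hnd1 : ¬ a (n + 1) ∣ 1 := fun h => by
        have := Nat.le_of_dvd one_pos h; omega
      have e1 := count_nd hΓ hA2 (x := 1) h1AB hnd1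
      have ex := count_nd hΓ hA2 (x := x) hxAB hdvd
      have c1 := cnt_le hΓ (by omega) 1
      have cx := cnt_le hΓ (by omega) x
      have c1' : (1 : ℕ) / a (n + 1) = 0 := Nat.div_eq_of_lt (by omega)
      have cx2 : x / a (n + 1) ≤ x / 2 := Nat.div_le_div_left hA2 (by omega)
      have hlam : lam * 1 ≤ lam * x := Nat.mul_le_mul_left lam hx1
      omega
/-- The minimum of `#Ap(Γₙ,x)` over the fundamental interval `{1,…,A₁}`
(i.e. the second Feng–Rao number `E(Γₙ,2)`) equals
`min {#S₁, #S_{Aₙ}, …, #S_{A₂}, #S_{A₁}}`. -/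
theorem stmt6 (n : ℕ) (hn : 1 ≤ n) (a b : ℕ → ℕ)
    (ha : ∀ i, 1 ≤ i → i ≤ n → 2 ≤ a i)
    (hb1 : 1 ≤ b 1)
    (hb : ∀ i, 1 ≤ i → i + 1 ≤ n → a i * b i ≤ b (i + 1))
    (A : ℕ → ℕ) (hA : ∀ i, A i = ∏ j ∈ Finset.Icc i n, a j) :
    sInf {m | ∃ x, 1 ≤ x ∧ x ≤ A 1 ∧ m = (Ap (IndSG a b n) x).ncard}
      = min ((Ap (IndSG a b n) 1).ncard)
          (sInf {m | ∃ i, 1 ≤ i ∧ i ≤ n ∧ m = (Ap (IndSG a b n) (A i)).ncard}) := by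
  set N : ℕ → ℕ := fun x => (Ap (IndSG a b n) x).ncard with hN
  set SS : Set ℕ := {m | ∃ x, 1 ≤ x ∧ x ≤ A 1 ∧ m = N x} with hSS
  set TT : Set ℕ := {m | ∃ i, 1 ≤ i ∧ i ≤ n ∧ m = N (A i)} with hTT
  have hA1 : A 1 = ∏ j ∈ Finset.Icc 1 n, a j := hA 1
  have hP1 : 1 ≤ A 1 := hA1 ▸ prod_pos n 1 a ha le_rfl
  have hAin : ∀ i, 1 ≤ i → i ≤ n → 1 ≤ A i ∧ A i ≤ A 1 := by
    intro i hi1 hi2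
    rw [hA i, hA1]
    exact ⟨prod_pos n i a ha hi1, prod_tail_le n a ha i hi1⟩
  have hS1 : N 1 ∈ SS := ⟨1, le_rfl, hP1, rfl⟩
  have hTsub : ∀ m ∈ TT, m ∈ SS := by
    rintro m ⟨i, hi1, hi2, rfl⟩
    exact ⟨A i, (hAin i hi1 hi2).1, (hAin i hi1 hi2).2, rfl⟩
  have hTne : TT.Nonempty := ⟨N (A 1), 1, le_rfl, hn, rfl⟩
  have hSne : SS.Nonempty := ⟨N 1, hS1⟩
  apply le_antisymm
  · apply le_min (Nat.sInf_le hS1)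
    exact Nat.sInf_le (hTsub _ (Nat.sInf_mem hTne))
  · obtain ⟨x, hx1, hx2, hEq⟩ := Nat.sInf_mem hSne
    obtain ⟨x', hspec, hle⟩ := key n a b ha hb1 hb 0 x hx1 (hA1 ▸ hx2)
    simp only [Nat.zero_mul, Nat.add_zero] at hle
    rw [hEq]
    rcases hspec with rfl | ⟨i, hi1, hi2, hx'⟩
    · exact le_trans (min_le_left _ _) hle
    · refine le_trans (min_le_right _ _) (le_trans (Nat.sInf_le ?_) hle)
      exact ⟨i, hi1, hi2, by rw [hA i, ← hx']⟩
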